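/- Let $(\mathcal{X},\mu)$ be a probability space with a measure-preserving $\mathbb{Z}$-action and $\{B_t\}_{t>0}$ a monotone family of shrinking targets. Fix $i\geq 1$. Then for almost every $x\in\mathcal{X}$, $\liminf_{t\to\infty}\frac{\log\tau^i_{B_t}(x)}{-\log\mu(B_t)}\geq 1$. -/

import Mathlib

open MeasureTheory Filter
open scoped ENNReal

open Classical in
/-- The `i`-th hitting time `τ_B^i(x)`: the least `m ≥ 1` such that the orbit points
`x h_1, …, x h_m` lie in `B` exactly `i` times (junk value `sInf ∅ = 0` if it never happens). -/
noncomputable def hitTime {X : Type*} (h : ℤ → X → X) (B : Set X) (i : ℕ) (x : X) : ℕ :=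
  sInf {m : ℕ | 1 ≤ m ∧ ((Finset.Icc 1 m).filter (fun j => h (j : ℤ) x ∈ B)).card = i}

open Classical in
/-- The ratio `log τ^i_{B_t}(x) / (-log μ(B_t))`, interpreted as `⊤` when the orbit of `x`
never hits `B t` for the `i`-th time. -/
noncomputable def hitRatio {X : Type*} [MeasurableSpace X] (μ : Measure X)
    (h : ℤ → X → X) (B : ℝ → Set X) (i : ℕ) (x : X) (t : ℝ) : EReal :=
  if {m : ℕ | 1 ≤ m ∧ ((Finset.Icc 1 m).filter (fun j => h (j : ℤ) x ∈ B t)).card = i}.Nonempty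
  then ((Real.log (hitTime h (B t) i x) / (-Real.log ((μ (B t)).toReal)) : ℝ) : EReal)
  else ⊤

/-- Cover lemma: the union of all `B t` with `1 ≤ t` and `μ (B t) ≤ ε` is contained in a
measurable set of measure at most `ε`. -/
lemma cover_lemma {X : Type*} [MeasurableSpace X] (μ : Measure X)
    (B : ℝ → Set X) (hBmeas : ∀ t, MeasurableSet (B t))
    (hmono : ∀ s t : ℝ, 0 < s → s ≤ t → B t ⊆ B s)
    (ε : ℝ≥0∞) (hS : {t : ℝ | 1 ≤ t ∧ μ (B t) ≤ ε}.Nonempty) :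
    ∃ U : Set X, MeasurableSet U ∧ μ U ≤ ε ∧
      ∀ t : ℝ, 1 ≤ t → μ (B t) ≤ ε → B t ⊆ U := by
  set S := {t : ℝ | 1 ≤ t ∧ μ (B t) ≤ ε} with hSdef
  have hbdd : BddBelow S := ⟨1, fun t ht => ht.1⟩
  set a := sInf S with ha
  by_cases haS : a ∈ S
  · refine ⟨B a, hBmeas a, haS.2, fun t ht1 htε => ?_⟩
    exact hmono a t (lt_of_lt_of_le one_pos haS.1) (csInf_le hbdd ⟨ht1, htε⟩)
  · have hu : ∀ m : ℕ, ∃ u, u ∈ S ∧ u < a + 1 / (m + 1) := by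
      intro m
      have hpos : (0:ℝ) < 1 / (m + 1) := by positivity
      have : sInf S < a + 1 / (m + 1) := by
        rw [← ha]; linarith
      obtain ⟨u, huS, hult⟩ := (csInf_lt_iff hbdd hS).1 this
      exact ⟨u, huS, hult⟩
    choose u huS hult using hu
    -- v m = min of u 0, ..., u m
    set v : ℕ → ℝ := fun m => (Finset.range (m + 1)).inf' ⟨0, Finset.mem_range.2 (Nat.succ_pos m)⟩ u
      with hv
    have hvS : ∀ m, v m ∈ S := by
      intro m
      exact Finset.inf'_mem S (fun x hx y hy => by rcases min_choice x y with h | h <;> rw [show x ⊓ y = min x y from rfl, h] <;> assumption) _ _ _ (fun b hb => huS b)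
    have hvle : ∀ m, v m ≤ u m := fun m =>
      Finset.inf'_le _ (Finset.mem_range.2 (Nat.lt_succ_self m))
    have hvanti : Antitone v := by
      intro m m' hmm'
      apply Finset.inf'_mono
      exact Finset.range_subset_range.2 (Nat.succ_le_succ hmm')
    have hdir : Directed (· ⊆ ·) (fun m => B (v m)) := by
      intro m m'
      refine ⟨max m m', ?_, ?_⟩
      · exact hmono _ _ (lt_of_lt_of_le one_pos (hvS _).1) (hvanti (le_max_left m m'))
      · exact hmono _ _ (lt_of_lt_of_le one_pos (hvS _).1) (hvanti (le_max_right m m'))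
    refine ⟨⋃ m, B (v m), MeasurableSet.iUnion (fun m => hBmeas _), ?_, ?_⟩
    · rw [hdir.measure_iUnion]
      exact iSup_le fun m => (hvS m).2
    · intro t ht1 htε x hx
      have htS : t ∈ S := ⟨ht1, htε⟩
      have hat : a < t := lt_of_le_of_ne (csInf_le hbdd htS) (fun hh => haS (hh ▸ htS))
      obtain ⟨m, hm⟩ := exists_nat_one_div_lt (sub_pos.2 hat)
      have : v m < t := lt_of_le_of_lt (hvle m) (by have := hult m; push_cast at hm ⊢; linarith)
      exact Set.mem_iUnion.2 ⟨m, hmono (v m) t (lt_of_lt_of_le one_pos (hvS m).1) this.le hx⟩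

theorem stmt2 {X : Type*} [MeasurableSpace X] (μ : Measure X) [IsProbabilityMeasure μ]
    (h : ℤ → X → X) (hmeas : ∀ k : ℤ, MeasurePreserving (h k) μ μ)
    (hact : ∀ k l : ℤ, ∀ x : X, h (k + l) x = h k (h l x))
    (B : ℝ → Set X) (hBmeas : ∀ t, MeasurableSet (B t))
    (hmono : ∀ s t : ℝ, 0 < s → s ≤ t → B t ⊆ B s)
    (hpos : ∀ t : ℝ, 0 < μ (B t))
    (hshrink : Tendsto (fun t : ℝ => μ (B t)) atTop (nhds 0))
    (i : ℕ) (hi : 1 ≤ i) :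
    ∀ᵐ x ∂μ, (1 : EReal) ≤ Filter.liminf (fun t : ℝ => hitRatio μ h B i x t) atTop := by
  classical
  have key : ∀ n : ℕ, ∀ᵐ x ∂μ, ∀ᶠ t : ℝ in atTop,
      ((((n : ℝ) / (n + 1)) ^ 2 : ℝ) : EReal) ≤ hitRatio μ h B i x t := by
    intro n
    set c : ℕ → ℝ≥0∞ := fun k => 2⁻¹ ^ (k * (n + 1)) with hc
    have hcanti : ∀ k l : ℕ, k ≤ l → c l ≤ c k := by
      intro k l hkl
      exact pow_le_pow_of_le_one zero_le (ENNReal.inv_le_one.2 one_le_two)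
        (Nat.mul_le_mul_right _ hkl)
    have hclt1 : ∀ k : ℕ, 1 ≤ k → c k ≤ 2⁻¹ := by
      intro k hk
      calc c k ≤ c 1 := hcanti 1 k hk
        _ = 2⁻¹ ^ (n + 1) := by simp [hc]
        _ ≤ 2⁻¹ ^ 1 := pow_le_pow_of_le_one zero_le (ENNReal.inv_le_one.2 one_le_two)
            (by omega)
        _ = 2⁻¹ := pow_one _
    have hSne : ∀ k : ℕ, {t : ℝ | 1 ≤ t ∧ μ (B t) ≤ c k}.Nonempty := by
      intro k
      have hck : (0 : ℝ≥0∞) < c k := ENNReal.pow_pos (by norm_num) _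
      obtain ⟨T, hT⟩ := eventually_atTop.1 (hshrink.eventually_le_const hck)
      exact ⟨max T 1, le_max_right _ _, hT _ (le_max_left _ _)⟩
    choose U hUmeas hUle hUcov using fun k => cover_lemma μ B hBmeas hmono (c k) (hSne k)
    set E : ℕ → Set X := fun k => ⋃ j ∈ Finset.Icc (1 : ℕ) (2 ^ (k * n)), (h (j : ℤ)) ⁻¹' (U k)
      with hE
    have hEmeas : ∀ k, μ (E k) ≤ 2⁻¹ ^ k := by
      intro k
      calc μ (E k) ≤ ∑ j ∈ Finset.Icc (1 : ℕ) (2 ^ (k * n)), μ ((h (j : ℤ)) ⁻¹' (U k)) :=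
            measure_biUnion_finset_le _ _
        _ = ∑ _j ∈ Finset.Icc (1 : ℕ) (2 ^ (k * n)), μ (U k) :=
            Finset.sum_congr rfl fun j _ =>
              (hmeas (j : ℤ)).measure_preimage (hUmeas k).nullMeasurableSet
        _ = (2 ^ (k * n) : ℕ) * μ (U k) := by
            simp [Finset.sum_const, nsmul_eq_mul, Nat.card_Icc]
        _ ≤ (2 : ℝ≥0∞) ^ (k * n) * (2⁻¹ ^ (k * (n + 1))) := by
            push_cast
            exact mul_le_mul_right (hUle k) _
        _ = 2⁻¹ ^ k := by
            rw [show k * (n + 1) = k * n + k by ring, pow_add, ← mul_assoc, ← mul_pow,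
              ENNReal.mul_inv_cancel (by norm_num) (by norm_num), one_pow, one_mul]
    have hsum : (∑' k, μ (E k)) ≠ ∞ := by
      refine ne_top_of_le_ne_top ?_ (ENNReal.tsum_le_tsum hEmeas)
      rw [ENNReal.tsum_geometric, ENNReal.one_sub_inv_two]
      simp
    have hBC := MeasureTheory.ae_eventually_notMem (μ := μ) hsum
    filter_upwards [hBC] with x hx
    obtain ⟨K, hK⟩ := eventually_atTop.1 hx
    set K' := max (max K n) 1 with hK'
    obtain ⟨T, hT⟩ := eventually_atTop.1 (hshrink.eventually_le_const
      (show (0 : ℝ≥0∞) < c K' from ENNReal.pow_pos (by norm_num) _))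
    rw [eventually_atTop]
    refine ⟨max T 1, fun t ht => ?_⟩
    have ht1 : (1 : ℝ) ≤ t := le_trans (le_max_right _ _) ht
    have htμ : μ (B t) ≤ c K' := hT t (le_trans (le_max_left _ _) ht)
    by_cases hne : {m : ℕ | 1 ≤ m ∧
        ((Finset.Icc 1 m).filter (fun j => h (j : ℤ) x ∈ B t)).card = i}.Nonempty
    · unfold hitRatio
      rw [if_pos hne]
      set N := hitTime h (B t) i x with hN
      obtain ⟨hτ1, hτcard⟩ := Nat.sInf_mem hne
      have hτ1' : 1 ≤ N := hτ1
      have hcardpos : 0 < i := hi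
      rw [← hτcard] at hcardpos
      obtain ⟨j, hj⟩ := Finset.card_pos.1 hcardpos
      rw [Finset.mem_filter] at hj
      obtain ⟨hjmem, hjB⟩ := hj
      simp only [Bind.bind, Pure.pure, Finset.mem_sup, Finset.mem_Icc,
        Finset.mem_singleton] at hjmem
      obtain ⟨a, ⟨ha1, haN⟩, rfl⟩ := hjmem
      have haN' : a ≤ N := haN
      -- define k, the largest scale with μ (B t) ≤ c k
      set D := {k : ℕ | μ (B t) ≤ c k} with hD
      have hK'D : K' ∈ D := htμ
      have hDbdd : BddAbove D := by
        obtain ⟨m, hm⟩ := ENNReal.exists_inv_two_pow_lt (hpos t).ne'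
        refine ⟨m * (n + 1), fun l hl => ?_⟩
        by_contra hml
        push_neg at hml
        have hcl : c l ≤ 2⁻¹ ^ m :=
          pow_le_pow_of_le_one zero_le (ENNReal.inv_le_one.2 one_le_two) (by nlinarith)
        exact absurd (lt_of_le_of_lt (le_trans hl hcl) hm) (lt_irrefl _)
      set k := sSup D with hk
      have hkD : k ∈ D := Nat.sSup_mem ⟨K', hK'D⟩ hDbdd
      have hkK' : K' ≤ k := le_csSup hDbdd hK'D
      have hck1 : c (k + 1) < μ (B t) := by
        by_contra hcon
        push_neg at hcon
        exact absurd (le_csSup hDbdd (hcon : k + 1 ∈ D)) (by omega)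
      -- x avoids E k, so the first 2^(k*n) orbit points avoid U k ⊇ B t
      have hxE : x ∉ E k := hK k (le_trans (le_trans (le_max_left _ _) (le_max_left _ _)) hkK')
      have hBU : B t ⊆ U k := hUcov k t ht1 hkD
      have hjbig : 2 ^ (k * n) < a := by
        by_contra hcon
        push_neg at hcon
        exact hxE (Set.mem_iUnion₂.2 ⟨a, Finset.mem_Icc.2 ⟨ha1, hcon⟩, hBU hjB⟩)
      have hNbig : 2 ^ (k * n) < N := lt_of_lt_of_le hjbig haN'
      -- the real computation
      have hkn : (n : ℝ) ≤ k := by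
        exact_mod_cast le_trans (le_trans (le_max_right _ _) (le_max_left _ _)) hkK'
      have hk1 : (1 : ℕ) ≤ k := le_trans (le_max_right _ _) hkK'
      set μr := (μ (B t)).toReal with hμr
      have hμrpos : 0 < μr := ENNReal.toReal_pos (hpos t).ne' (measure_ne_top μ _)
      have hμrhalf : μr ≤ 1 / 2 := by
        have h2 : μ (B t) ≤ 2⁻¹ := le_trans htμ (hclt1 K' (le_max_right _ _))
        calc μr ≤ ((2 : ℝ≥0∞)⁻¹).toReal := ENNReal.toReal_mono (by simp) h2
          _ = 1 / 2 := by simp [ENNReal.toReal_inv]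
      have hμrlow : ((2 : ℝ)⁻¹) ^ ((k + 1) * (n + 1)) < μr := by
        have hlt := ENNReal.toReal_strict_mono (measure_ne_top μ _) hck1
        calc ((2 : ℝ)⁻¹) ^ ((k + 1) * (n + 1))
            = ((2⁻¹ : ℝ≥0∞) ^ ((k + 1) * (n + 1))).toReal := by
              simp [ENNReal.toReal_pow, ENNReal.toReal_inv]
          _ < μr := hlt
      set Dd := -Real.log μr with hDd
      have hDdpos : 0 < Dd := by
        have hlt : Real.log μr < 0 := Real.log_neg hμrpos (by linarith)
        simp only [hDd]
        linarith
      have hDdlt : Dd < (((k + 1) * (n + 1) : ℕ) : ℝ) * Real.log 2 := by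
        have hlog := Real.log_lt_log (by positivity) hμrlow
        rw [Real.log_pow, Real.log_inv] at hlog
        simp only [hDd]
        push_cast at hlog ⊢
        linarith
      have hnum : (((k * n : ℕ) : ℝ)) * Real.log 2 ≤ Real.log N := by
        have h2N : (2 : ℝ) ^ (k * n) ≤ (N : ℝ) := by
          exact_mod_cast Nat.le_of_lt hNbig
        have hNpos : (0 : ℝ) < N := by
          exact_mod_cast lt_of_lt_of_le Nat.zero_lt_one hτ1'
        have hlog := (Real.log_le_log_iff (by positivity) hNpos).2 h2N
        rwa [Real.log_pow] at hlog
      rw [EReal.coe_le_coe_iff]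
      have hlog2 : (0 : ℝ) < Real.log 2 := Real.log_pos one_lt_two
      calc ((n : ℝ) / (n + 1)) ^ 2 ≤ ((k : ℝ) * n) / ((k + 1) * (n + 1)) := by
            rw [div_pow, div_le_div_iff₀ (by positivity) (by positivity)]
            have hn0 : (0 : ℝ) ≤ (n : ℝ) := Nat.cast_nonneg n
            nlinarith [mul_nonneg (mul_nonneg hn0 (by linarith : (0 : ℝ) ≤ (n : ℝ) + 1))
              (sub_nonneg.2 hkn)]
        _ = ((k : ℝ) * n * Real.log 2) / ((k + 1) * (n + 1) * Real.log 2) :=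
            (mul_div_mul_right _ _ hlog2.ne').symm
        _ ≤ ((k : ℝ) * n * Real.log 2) / Dd := by
            apply div_le_div_of_nonneg_left (by positivity) hDdpos
            push_cast at hDdlt
            linarith
        _ ≤ Real.log N / Dd := by
            apply (div_le_div_iff_of_pos_right hDdpos).2
            push_cast at hnum
            linarith
    · unfold hitRatio
      rw [if_neg hne]
      exact le_top
  rw [← MeasureTheory.ae_all_iff] at key
  filter_upwards [key] with x hx
  have hlim : ∀ n : ℕ, ((((n : ℝ) / (n + 1)) ^ 2 : ℝ) : EReal) ≤
      Filter.liminf (fun t : ℝ => hitRatio μ h B i x t) atTop := fun n =>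
    Filter.le_liminf_of_le (by isBoundedDefault) (hx n)
  have htend : Tendsto (fun n : ℕ => ((((n : ℝ) / (n + 1)) ^ 2 : ℝ) : EReal)) atTop
      (nhds (1 : EReal)) := by
    have h1 : Tendsto (fun n : ℕ => ((n : ℝ) / (n + 1)) ^ 2) atTop (nhds 1) := by
      have h2 := (tendsto_natCast_div_add_atTop (1 : ℝ)).pow 2
      simpa using h2
    have h3 := EReal.tendsto_coe.2 h1
    simpa using h3
  exact le_of_tendsto htend (Eventually.of_forall hlim)
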